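/- The Jacobian algebra ℂ[x,y,z]/(4x^3 + z^2, y^2, xz) admits a ℂ-basis consisting of the residue classes of the 10 monomials 1, x, x^2, y, xy, x^2y, z, yz, x^3, x^3y. -/

import Mathlib

open MvPolynomial

set_option maxHeartbeats 1000000

noncomputable section

abbrev R3 : Type := MvPolynomial (Fin 3) ℂ

/-- The Jacobian ideal of the `Q₁₀` polynomial `x⁴ + y³ + xz²`
(with harmless scalar factors removed): `4x³ + z²`, `y²`, `xz`. -/
def J2 : Ideal R3 := Ideal.span {4 * X 0 ^ 3 + X 2 ^ 2, X 1 ^ 2, X 0 * X 2}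

/-- The ten monomials `1, x, x², y, xy, x²y, z, yz, x³, x³y`. -/
def ms2 : Fin 10 → R3 :=
  ![1, X 0, X 0 ^ 2, X 1, X 0 * X 1, X 0 ^ 2 * X 1, X 2, X 1 * X 2,
    X 0 ^ 3, X 0 ^ 3 * X 1]

-- linear functionals reading off normal-form coefficients
def φ : Fin 10 → (R3 →ₗ[ℂ] ℂ) :=
  ![lcoeff ℂ 0, lcoeff ℂ (.single 0 1), lcoeff ℂ (.single 0 2), lcoeff ℂ (.single 1 1),
    lcoeff ℂ (.single 0 1 + .single 1 1), lcoeff ℂ (.single 0 2 + .single 1 1),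
    lcoeff ℂ (.single 2 1), lcoeff ℂ (.single 1 1 + .single 2 1),
    lcoeff ℂ (.single 0 3) - (4:ℂ) • lcoeff ℂ (.single 2 2),
    lcoeff ℂ (.single 0 3 + .single 1 1) - (4:ℂ) • lcoeff ℂ (.single 1 1 + .single 2 2)]


lemma φ0 : φ 0 = lcoeff ℂ 0 := rfl
lemma φ1 : φ 1 = lcoeff ℂ (.single 0 1) := rfl
lemma φ2 : φ 2 = lcoeff ℂ (.single 0 2) := rfl
lemma φ3 : φ 3 = lcoeff ℂ (.single 1 1) := rfl
lemma φ4 : φ 4 = lcoeff ℂ (.single 0 1 + .single 1 1) := rfl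
lemma φ5 : φ 5 = lcoeff ℂ (.single 0 2 + .single 1 1) := rfl
lemma φ6 : φ 6 = lcoeff ℂ (.single 2 1) := rfl
lemma φ7 : φ 7 = lcoeff ℂ (.single 1 1 + .single 2 1) := rfl
lemma φ8 : φ 8 = lcoeff ℂ (.single 0 3) - (4:ℂ) • lcoeff ℂ (.single 2 2) := rfl
lemma φ9 : φ 9 = lcoeff ℂ (.single 0 3 + .single 1 1) - (4:ℂ) • lcoeff ℂ (.single 1 1 + .single 2 2) := rfl

lemma coeffmm (m s : Fin 3 →₀ ℕ) (a : ℂ) (p : R3) :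
    coeff m (p * monomial s a) = if s ≤ m then coeff (m - s) p * a else 0 :=
  coeff_mul_monomial' m s a p

lemma coeffX (m : Fin 3 →₀ ℕ) (i : Fin 3) (p : R3) :
    coeff m (p * X i) = if 1 ≤ m i then coeff (m - Finsupp.single i 1) p else 0 := by
  rw [show (X i : R3) = monomial (Finsupp.single i 1) 1 by rw [← X_pow_eq_monomial, pow_one],
    coeffmm]
  simp [Finsupp.single_le_iff]

lemma kerg2 (j : Fin 10) (r : R3) : φ j (r * X 1 ^ 2) = 0 := by
  rw [sq, ← mul_assoc]
  fin_cases j <;>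
    simp [φ0, φ1, φ2, φ3, φ4, φ5, φ6, φ7, φ8, φ9, lcoeff_apply, coeffX, Finsupp.single_apply, Finsupp.add_apply, Finsupp.tsub_apply]

lemma kerg3 (j : Fin 10) (r : R3) : φ j (r * (X 0 * X 2)) = 0 := by
  rw [← mul_assoc]
  fin_cases j <;>
    simp [φ0, φ1, φ2, φ3, φ4, φ5, φ6, φ7, φ8, φ9, lcoeff_apply, coeffX, Finsupp.single_apply, Finsupp.add_apply, Finsupp.tsub_apply]

lemma kerg1 (j : Fin 10) (r : R3) : φ j (r * (4 * X 0 ^ 3 + X 2 ^ 2)) = 0 := by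
  have h4 : (4 : R3) = C (4:ℂ) := (map_ofNat C 4).symm
  rw [mul_add, h4, C_mul_X_pow_eq_monomial, sq (X 2), ← mul_assoc]
  have fs1 : (Finsupp.single 2 2 - Finsupp.single 2 1 - Finsupp.single 2 1 : Fin 3 →₀ ℕ) = 0 := by
    ext i; fin_cases i <;> simp [Finsupp.single_apply]
  have fs2 : ((Finsupp.single 0 3 + Finsupp.single 1 1) - Finsupp.single 0 3 : Fin 3 →₀ ℕ) =
      Finsupp.single 1 1 := by
    ext i; fin_cases i <;> simp [Finsupp.single_apply]
  have fs3 : ((Finsupp.single 1 1 + Finsupp.single 2 2) - Finsupp.single 2 1 - Finsupp.single 2 1 :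
      Fin 3 →₀ ℕ) = Finsupp.single 1 1 := by
    ext i; fin_cases i <;> simp [Finsupp.single_apply]
  fin_cases j <;>
    simp [φ0, φ1, φ2, φ3, φ4, φ5, φ6, φ7, φ8, φ9, lcoeff_apply, coeffmm, coeffX, fs1, fs2, fs3,
      Finsupp.single_le_iff, Finsupp.single_apply, Finsupp.add_apply, Finsupp.tsub_apply] <;>
    ring


lemma hker {p : R3} (hp : p ∈ J2) (j : Fin 10) : φ j p = 0 := by
  rw [J2, Ideal.mem_span_insert] at hp
  obtain ⟨r, z, hz, rfl⟩ := hp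
  rw [Ideal.mem_span_insert] at hz
  obtain ⟨s, w, hw, rfl⟩ := hz
  rw [Ideal.mem_span_singleton] at hw
  obtain ⟨t, rfl⟩ := hw
  rw [mul_comm (X 0 * X 2) t]
  simp only [map_add, kerg1, kerg2, kerg3, add_zero]

lemma Xm (k : Fin 3) : (X k : R3) = monomial (Finsupp.single k 1) 1 := by
  rw [← X_pow_eq_monomial, pow_one]

lemma ms2_0 : ms2 0 = 1 := rfl
lemma ms2_1 : ms2 1 = X 0 := rfl
lemma ms2_2 : ms2 2 = X 0 ^ 2 := rfl
lemma ms2_3 : ms2 3 = X 1 := rfl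
lemma ms2_4 : ms2 4 = X 0 * X 1 := rfl
lemma ms2_5 : ms2 5 = X 0 ^ 2 * X 1 := rfl
lemma ms2_6 : ms2 6 = X 2 := rfl
lemma ms2_7 : ms2 7 = X 1 * X 2 := rfl
lemma ms2_8 : ms2 8 = X 0 ^ 3 := rfl
lemma ms2_9 : ms2 9 = X 0 ^ 3 * X 1 := rfl

lemma fseq (a b : Fin 3 →₀ ℕ) : a = b ↔ (a 0 = b 0 ∧ a 1 = b 1 ∧ a 2 = b 2) := by
  constructor
  · rintro rfl; exact ⟨rfl, rfl, rfl⟩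
  · rintro ⟨h0, h1, h2⟩; ext i; fin_cases i <;> assumption

lemma hdelta (i j : Fin 10) : φ j (ms2 i) = if i = j then 1 else 0 := by
  fin_cases i <;> fin_cases j <;>
    simp [ms2_0, ms2_1, ms2_2, ms2_3, ms2_4, ms2_5, ms2_6, ms2_7, ms2_8, ms2_9,
      φ0, φ1, φ2, φ3, φ4, φ5, φ6, φ7, φ8, φ9, Xm, monomial_mul, monomial_pow, X_pow_eq_monomial,
      lcoeff_apply, coeff_monomial, coeff_one, fseq,
      Finsupp.single_apply, Finsupp.add_apply, Finsupp.smul_apply]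

lemma indep : LinearIndependent ℂ (fun i => Ideal.Quotient.mk J2 (ms2 i)) := by
  rw [Fintype.linearIndependent_iff]
  intro g hg j
  have hmem : (∑ i, g i • ms2 i) ∈ J2 := by
    rw [← Ideal.Quotient.eq_zero_iff_mem]
    have : Ideal.Quotient.mk J2 (∑ i, g i • ms2 i)
        = ∑ i, g i • Ideal.Quotient.mk J2 (ms2 i) := by
      rw [show (Ideal.Quotient.mk J2 : R3 → R3 ⧸ J2) = (Ideal.Quotient.mkₐ ℂ J2 : R3 → R3 ⧸ J2)
        from rfl]
      rw [map_sum]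
      simp only [map_smul]
    rw [this, hg]
  have h0 : φ j (∑ i, g i • ms2 i) = 0 := hker hmem j
  rw [map_sum] at h0
  simp only [map_smul, hdelta, smul_eq_mul, mul_ite, mul_one, mul_zero] at h0
  simpa using h0


lemma gen1_mem : (4 * X 0 ^ 3 + X 2 ^ 2 : R3) ∈ J2 :=
  Ideal.subset_span (by simp)
lemma gen2_mem : (X 1 ^ 2 : R3) ∈ J2 := Ideal.subset_span (by simp)
lemma gen3_mem : (X 0 * X 2 : R3) ∈ J2 := Ideal.subset_span (by simp)

lemma hg1q : (Ideal.Quotient.mk J2 (X 2))^2 = -(4 * (Ideal.Quotient.mk J2 (X 0))^3) := by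
  have h : Ideal.Quotient.mk J2 (4 * X 0 ^ 3 + X 2 ^ 2) = 0 :=
    Ideal.Quotient.eq_zero_iff_mem.mpr gen1_mem
  simp only [map_add, map_mul, map_pow, map_ofNat] at h
  linear_combination h

lemma hxzq : (Ideal.Quotient.mk J2 (X 0)) * (Ideal.Quotient.mk J2 (X 2)) = 0 := by
  rw [← map_mul]; exact Ideal.Quotient.eq_zero_iff_mem.mpr gen3_mem

lemma hx4q : (Ideal.Quotient.mk J2 (X 0))^4 = 0 := by
  have h2 : (4 : R3 ⧸ J2) * (Ideal.Quotient.mk J2 (X 0))^4 = 0 := by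
    have h : Ideal.Quotient.mk J2 (X 0) * (Ideal.Quotient.mk J2 (X 2))^2 = 0 := by
      rw [sq, ← mul_assoc, hxzq, zero_mul]
    rw [hg1q] at h
    linear_combination -h
  have hinv : Ideal.Quotient.mk J2 (C (4⁻¹:ℂ)) * (4 : R3 ⧸ J2) = 1 := by
    rw [show (4 : R3 ⧸ J2) = Ideal.Quotient.mk J2 (C (4:ℂ)) by
        rw [show (C (4:ℂ) : R3) = 4 from map_ofNat C 4, map_ofNat],
      ← map_mul, ← C_mul]
    norm_num
  calc (Ideal.Quotient.mk J2 (X 0))^4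
      = (Ideal.Quotient.mk J2 (C (4⁻¹:ℂ)) * 4) * (Ideal.Quotient.mk J2 (X 0))^4 := by
        rw [hinv, one_mul]
    _ = Ideal.Quotient.mk J2 (C (4⁻¹:ℂ)) * (4 * (Ideal.Quotient.mk J2 (X 0))^4) := by ring
    _ = 0 := by rw [h2, mul_zero]

lemma span_top :
    ⊤ ≤ Submodule.span ℂ (Set.range fun i => Ideal.Quotient.mk J2 (ms2 i)) := by
  set mkq := Ideal.Quotient.mk J2 with hmkq
  set S := Submodule.span ℂ (Set.range fun i => Ideal.Quotient.mk J2 (ms2 i)) with hS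
  have hsX : ∀ j : Fin 10, mkq (ms2 j) ∈ S := fun j => Submodule.subset_span ⟨j, rfl⟩
  have hzero : ∀ p : R3, p ∈ J2 → mkq p ∈ S := fun p hp => by
    rw [hmkq, Ideal.Quotient.eq_zero_iff_mem.mpr hp]; exact Submodule.zero_mem S
  have hneg4 : ∀ u : R3 ⧸ J2, -(4 * u) = (-4 : ℂ) • u := by
    intro u
    obtain ⟨p, rfl⟩ := Ideal.Quotient.mk_surjective u
    rw [show ((Ideal.Quotient.mk J2 : R3 → R3 ⧸ J2) p) = Ideal.Quotient.mkₐ ℂ J2 p from rfl,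
      ← map_smul, smul_eq_C_mul, show (C (-4:ℂ) : R3) = -4 by rw [map_neg, map_ofNat]]
    simp only [map_mul, map_neg, map_ofNat, neg_mul]
  have hbase : ∀ (k : Fin 3) (j : Fin 10), mkq (X k * ms2 j) ∈ S := by
    intro k j
    fin_cases k <;> fin_cases j
    · show mkq (X 0 * ms2 0) ∈ S
      rw [ms2_0, mul_one]; exact hsX 1
    · show mkq (X 0 * ms2 1) ∈ S
      rw [ms2_1, ← sq]; exact hsX 2
    · show mkq (X 0 * ms2 2) ∈ S
      rw [ms2_2, show (X 0 * X 0^2 : R3) = X 0^3 by ring]; exact hsX 8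
    · show mkq (X 0 * ms2 3) ∈ S
      rw [ms2_3]; exact hsX 4
    · show mkq (X 0 * ms2 4) ∈ S
      rw [ms2_4, show (X 0 * (X 0 * X 1) : R3) = X 0^2 * X 1 by ring]; exact hsX 5
    · show mkq (X 0 * ms2 5) ∈ S
      rw [ms2_5, show (X 0 * (X 0^2 * X 1) : R3) = X 0^3 * X 1 by ring]; exact hsX 9
    · show mkq (X 0 * ms2 6) ∈ S
      rw [ms2_6]; exact hzero _ gen3_mem
    · show mkq (X 0 * ms2 7) ∈ S
      rw [ms2_7]
      refine hzero _ ?_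
      rw [show (X 0 * (X 1 * X 2) : R3) = X 1 * (X 0 * X 2) by ring]
      exact Ideal.mul_mem_left _ _ gen3_mem
    · show mkq (X 0 * ms2 8) ∈ S
      rw [ms2_8, show (X 0 * X 0^3 : R3) = X 0^4 by ring, map_pow, hx4q]
      exact Submodule.zero_mem S
    · show mkq (X 0 * ms2 9) ∈ S
      rw [ms2_9, show (X 0 * (X 0^3 * X 1) : R3) = X 0^4 * X 1 by ring, map_mul, map_pow, hx4q,
        zero_mul]
      exact Submodule.zero_mem S
    · show mkq (X 1 * ms2 0) ∈ S
      rw [ms2_0, mul_one]; exact hsX 3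
    · show mkq (X 1 * ms2 1) ∈ S
      rw [ms2_1, mul_comm]; exact hsX 4
    · show mkq (X 1 * ms2 2) ∈ S
      rw [ms2_2, mul_comm]; exact hsX 5
    · show mkq (X 1 * ms2 3) ∈ S
      rw [ms2_3, ← sq]; exact hzero _ gen2_mem
    · show mkq (X 1 * ms2 4) ∈ S
      rw [ms2_4]
      refine hzero _ ?_
      rw [show (X 1 * (X 0 * X 1) : R3) = X 0 * X 1^2 by ring]
      exact Ideal.mul_mem_left _ _ gen2_mem
    · show mkq (X 1 * ms2 5) ∈ S
      rw [ms2_5]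
      refine hzero _ ?_
      rw [show (X 1 * (X 0^2 * X 1) : R3) = X 0^2 * X 1^2 by ring]
      exact Ideal.mul_mem_left _ _ gen2_mem
    · show mkq (X 1 * ms2 6) ∈ S
      rw [ms2_6]; exact hsX 7
    · show mkq (X 1 * ms2 7) ∈ S
      rw [ms2_7]
      refine hzero _ ?_
      rw [show (X 1 * (X 1 * X 2) : R3) = X 2 * X 1^2 by ring]
      exact Ideal.mul_mem_left _ _ gen2_mem
    · show mkq (X 1 * ms2 8) ∈ S
      rw [ms2_8, mul_comm]; exact hsX 9
    · show mkq (X 1 * ms2 9) ∈ S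
      rw [ms2_9]
      refine hzero _ ?_
      rw [show (X 1 * (X 0^3 * X 1) : R3) = X 0^3 * X 1^2 by ring]
      exact Ideal.mul_mem_left _ _ gen2_mem
    · show mkq (X 2 * ms2 0) ∈ S
      rw [ms2_0, mul_one]; exact hsX 6
    · show mkq (X 2 * ms2 1) ∈ S
      rw [ms2_1, mul_comm]; exact hzero _ gen3_mem
    · show mkq (X 2 * ms2 2) ∈ S
      rw [ms2_2]
      refine hzero _ ?_
      rw [show (X 2 * X 0^2 : R3) = X 0 * (X 0 * X 2) by ring]
      exact Ideal.mul_mem_left _ _ gen3_mem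
    · show mkq (X 2 * ms2 3) ∈ S
      rw [ms2_3, mul_comm]; exact hsX 7
    · show mkq (X 2 * ms2 4) ∈ S
      rw [ms2_4]
      refine hzero _ ?_
      rw [show (X 2 * (X 0 * X 1) : R3) = X 1 * (X 0 * X 2) by ring]
      exact Ideal.mul_mem_left _ _ gen3_mem
    · show mkq (X 2 * ms2 5) ∈ S
      rw [ms2_5]
      refine hzero _ ?_
      rw [show (X 2 * (X 0^2 * X 1) : R3) = (X 0 * X 1) * (X 0 * X 2) by ring]
      exact Ideal.mul_mem_left _ _ gen3_mem
    · show mkq (X 2 * ms2 6) ∈ S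
      rw [ms2_6, ← sq, map_pow, hg1q, ← map_pow, ← ms2_8, hneg4]
      exact Submodule.smul_mem S _ (hsX 8)
    · show mkq (X 2 * ms2 7) ∈ S
      rw [ms2_7, show (X 2 * (X 1 * X 2) : R3) = X 1 * X 2^2 by ring, map_mul, map_pow, hg1q]
      have : mkq (X 1) * -(4 * (mkq (X 0))^3) = (-4 : ℂ) • mkq (ms2 9) := by
        rw [ms2_9, map_mul, map_pow, ← hneg4]
        ring
      rw [this]; exact Submodule.smul_mem S _ (hsX 9)
    · show mkq (X 2 * ms2 8) ∈ S
      rw [ms2_8]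
      refine hzero _ ?_
      rw [show (X 2 * X 0^3 : R3) = X 0^2 * (X 0 * X 2) by ring]
      exact Ideal.mul_mem_left _ _ gen3_mem
    · show mkq (X 2 * ms2 9) ∈ S
      rw [ms2_9]
      refine hzero _ ?_
      rw [show (X 2 * (X 0^3 * X 1) : R3) = (X 0^2 * X 1) * (X 0 * X 2) by ring]
      exact Ideal.mul_mem_left _ _ gen3_mem
  have hclose : ∀ (k : Fin 3), ∀ u ∈ S, mkq (X k) * u ∈ S := by
    intro k u hu
    induction hu using Submodule.span_induction with
    | mem x hx => obtain ⟨j, rfl⟩ := hx; rw [← map_mul]; exact hbase k j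
    | zero => rw [mul_zero]; exact Submodule.zero_mem S
    | add x y hx hy ihx ihy => rw [mul_add]; exact Submodule.add_mem S ihx ihy
    | smul c x hx ih => rw [mul_smul_comm]; exact Submodule.smul_mem S c ih
  intro a ha
  clear ha
  obtain ⟨p, rfl⟩ := Ideal.Quotient.mk_surjective a
  induction p using MvPolynomial.induction_on with
  | C c =>
    have : mkq (C c) = c • mkq (ms2 0) := by
      rw [ms2_0, show (C c : R3) = c • (1 : R3) by rw [smul_eq_C_mul, mul_one], hmkq,
        ← Ideal.Quotient.mkₐ_eq_mk ℂ, map_smul]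
    rw [this]; exact Submodule.smul_mem S c (hsX 0)
  | add p q hp hq => rw [map_add]; exact Submodule.add_mem S hp hq
  | mul_X p k hp => rw [map_mul, mul_comm]; exact hclose k _ hp

/-- The residue classes of the ten monomials `1, x, x², y, xy, x²y, z, yz, x³,
x³y` form a `ℂ`-basis of `ℂ[x,y,z]/(4x³ + z², y², xz)`. -/
theorem stmt2 :
    ∃ b : Module.Basis (Fin 10) ℂ (R3 ⧸ J2),
      ∀ i, b i = Ideal.Quotient.mk J2 (ms2 i) := by
  exact ⟨Module.Basis.mk indep span_top, fun i => Module.Basis.mk_apply _ _ i⟩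

end
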